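/- Let C be a negacyclic conference matrix of order v ≡ 2 (mod 4) with first row c = (0, c_1, ..., c_{v-1}). Then the split sequences a = (0, c_2, c_4, ..., c_{v-2}) and b = (c_1, c_3, ..., c_{v-1}) of length v/2 satisfy NAF_a(k) + NAF_b(k) = NAF_c(2k) = 0 for all 0 < k < v/2; i.e., a and b are N-complementary. -/

import Mathlib

/-- Ordinary autocorrelation. -/
def AF (v : ℕ) (a : ℕ → ℤ) (k : ℕ) : ℤ :=
  ∑ i ∈ Finset.range (v - k), a i * a (i + k)

/-- Negaperiodic autocorrelation `NAF_a(k) = AF_a(k) - AF_a(v-k)`. -/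
def NAF (v : ℕ) (a : ℕ → ℤ) (k : ℕ) : ℤ :=
  AF v a k - AF v a (v - k)

/-- The negacyclic shift matrix `N` of order `v`. -/
def negaShift (v : ℕ) : Matrix (Fin v) (Fin v) ℤ :=
  Matrix.of fun i j => if (i : ℕ) + 1 = (j : ℕ) then 1
    else if (i : ℕ) = v - 1 ∧ (j : ℕ) = 0 then -1 else 0

/-- The negacyclic matrix of order `v` with first row `c`. -/
def negacyclic (v : ℕ) (c : ℕ → ℤ) : Matrix (Fin v) (Fin v) ℤ :=
  ∑ i ∈ Finset.range v, c i • (negaShift v) ^ i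

lemma sum_split (n : ℕ) (f : ℕ → ℤ) :
    ∑ i ∈ Finset.range (2*n), f i
      = ∑ i ∈ Finset.range n, f (2*i) + ∑ i ∈ Finset.range n, f (2*i+1) := by
  induction n with
  | zero => simp
  | succ n ih =>
    rw [show 2*(n+1) = 2*n+1+1 by ring, Finset.sum_range_succ, Finset.sum_range_succ,
      Finset.sum_range_succ, Finset.sum_range_succ, ih]
    ring

lemma AF_split (m : ℕ) (c : ℕ → ℤ) (k : ℕ) :
    AF m (fun i => c (2*i)) k + AF m (fun i => c (2*i+1)) k = AF (2*m) c (2*k) := by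
  unfold AF
  have h : 2*m - 2*k = 2*(m-k) := by omega
  rw [h, sum_split (m-k) (fun j => c j * c (j + 2*k))]
  congr 1
  · exact Finset.sum_congr rfl fun i _ => by congr 1; ring
  · exact Finset.sum_congr rfl fun i _ => by congr 1; ring

lemma NAF_split (m k : ℕ) (c : ℕ → ℤ) :
    NAF m (fun i => c (2*i)) k + NAF m (fun i => c (2*i+1)) k = NAF (2*m) c (2*k) := by
  unfold NAF
  have h : 2*m - 2*k = 2*(m-k) := by omega
  rw [h, ← AF_split m c k, ← AF_split m c (m-k)]
  ring

lemma negaShift_pow_entry (v : ℕ) : ∀ (i : ℕ), i < v → ∀ (k j : Fin v),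
    ((negaShift v) ^ i) k j =
      if (k : ℕ) + i < v then (if (j : ℕ) = (k : ℕ) + i then 1 else 0)
      else (if (j : ℕ) = (k : ℕ) + i - v then -1 else 0) := by
  intro i
  induction i with
  | zero =>
    intro _ k j
    rw [pow_zero, if_pos (by simpa using k.isLt)]
    simp [Matrix.one_apply, Fin.ext_iff, eq_comm]
  | succ i ih =>
    intro hi k j
    rw [pow_succ', Matrix.mul_apply]
    rcases Nat.lt_or_ge ((k:ℕ)+1) v with hk | hk
    · have hb := Finset.sum_eq_single_of_mem
        (f := fun m => negaShift v k m * ((negaShift v)^i) m j)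
        (⟨(k:ℕ)+1, hk⟩ : Fin v) (Finset.mem_univ _)
        (by
          intro m _ hm
          have hne : (k:ℕ) + 1 ≠ (m:ℕ) := fun h => hm (Fin.ext h.symm)
          have hk1 : ¬ ((k:ℕ) = v - 1 ∧ (m:ℕ) = 0) := by omega
          simp [negaShift, hne, hk1])
      rw [hb]
      have h1 : negaShift v k ⟨(k:ℕ)+1, hk⟩ = 1 := by simp [negaShift]
      rw [h1, one_mul, ih (by omega)]
      simp only [Fin.val_mk]
      have e : (k:ℕ) + 1 + i = (k:ℕ) + (i+1) := by omega
      rw [e]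
    · have hv0 : 0 < v := by omega
      have hb := Finset.sum_eq_single_of_mem
        (f := fun m => negaShift v k m * ((negaShift v)^i) m j)
        (⟨0, hv0⟩ : Fin v) (Finset.mem_univ _)
        (by
          intro m _ hm
          have hm0 : (m:ℕ) ≠ 0 := fun h => hm (Fin.ext h)
          have hne : (k:ℕ) + 1 ≠ (m:ℕ) := by have := m.isLt; omega
          have hk1 : ¬ ((k:ℕ) = v - 1 ∧ (m:ℕ) = 0) := by omega
          simp [negaShift, hne, hk1])
      rw [hb]
      have h1 : negaShift v k ⟨0, hv0⟩ = -1 := by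
        have h2 : (k:ℕ) + 1 ≠ (0 : ℕ) := by omega
        have hk1 : (k:ℕ) = v - 1 := by have := k.isLt; omega
        simp [negaShift, h2, hk1]
      rw [h1, ih (by omega), neg_one_mul]
      simp only [Fin.val_mk, Nat.zero_add]
      rw [if_pos (show i < v by omega),
        if_neg (show ¬ ((k:ℕ) + (i+1) < v) by omega)]
      have e : (k:ℕ) + (i+1) - v = i := by have := k.isLt; omega
      rw [e]
      split <;> simp

lemma negacyclic_apply (v : ℕ) (c : ℕ → ℤ) (k j : Fin v) :
    negacyclic v c k j =
      if (k:ℕ) ≤ (j:ℕ) then c ((j:ℕ) - (k:ℕ)) else - c (v + (j:ℕ) - (k:ℕ)) := by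
  unfold negacyclic
  rw [Matrix.sum_apply]
  by_cases h : (k:ℕ) ≤ (j:ℕ)
  · rw [Finset.sum_eq_single ((j:ℕ) - (k:ℕ))]
    · rw [Matrix.smul_apply, negaShift_pow_entry v _ (by have := j.isLt; omega) k j]
      rw [if_pos (by have := j.isLt; omega), if_pos (by omega)]
      rw [if_pos h]; simp
    · intro i hi hne
      have hiv := Finset.mem_range.mp hi
      rw [Matrix.smul_apply, negaShift_pow_entry v i hiv k j]
      have hjv := j.isLt
      rcases Nat.lt_or_ge ((k:ℕ)+i) v with hkv | hkv
      · rw [if_pos hkv, if_neg (by omega), smul_zero]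
      · rw [if_neg (by omega), if_neg (by omega), smul_zero]
    · intro hmem
      exact absurd (Finset.mem_range.mpr (by have := j.isLt; omega)) hmem
  · rw [Finset.sum_eq_single (v + (j:ℕ) - (k:ℕ))]
    · have hkv := k.isLt
      have hjv := j.isLt
      rw [Matrix.smul_apply, negaShift_pow_entry v _ (by omega) k j]
      rw [if_neg (by omega), if_pos (by omega), if_neg h]
      simp
    · intro i hi hne
      have hiv := Finset.mem_range.mp hi
      have hkv := k.isLt
      have hjv := j.isLt
      rw [Matrix.smul_apply, negaShift_pow_entry v i hiv k j]
      rcases Nat.lt_or_ge ((k:ℕ)+i) v with hkv' | hkv'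
      · rw [if_pos hkv', if_neg (by omega), smul_zero]
      · rw [if_neg (by omega), if_neg (by omega), smul_zero]
    · intro hmem
      have hkv := k.isLt
      have hjv := j.isLt
      exact absurd (Finset.mem_range.mpr (by omega)) hmem

lemma conf_entry (v : ℕ) (c : ℕ → ℤ) (s : ℕ) (hv0 : 0 < v) (hsv : s < v) :
    (negacyclic v c * (negacyclic v c).transpose) ⟨0, hv0⟩ ⟨s, hsv⟩ = NAF v c s := by
  rw [Matrix.mul_apply]
  have hterm : ∀ m : Fin v,
      negacyclic v c ⟨0, hv0⟩ m * (negacyclic v c).transpose m ⟨s, hsv⟩ =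
        (fun n : ℕ => c n * (if s ≤ n then c (n - s) else - c (v + n - s))) (m : ℕ) := by
    intro m
    rw [Matrix.transpose_apply, negacyclic_apply, negacyclic_apply]
    simp only [Fin.val_mk, Nat.zero_le, if_pos, Nat.sub_zero]
  rw [Finset.sum_congr rfl (fun m _ => hterm m),
    Fin.sum_univ_eq_sum_range (fun n : ℕ => c n * (if s ≤ n then c (n - s) else - c (v + n - s))) v]
  rw [show v = s + (v - s) by omega, Finset.sum_range_add]
  unfold NAF AF
  rw [show s + (v - s) - s = v - s by omega, show s + (v - s) - (v - s) = s by omega]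
  rw [sub_eq_add_neg, add_comm (∑ i ∈ Finset.range (v-s), c i * c (i+s))]
  congr 1
  · rw [← Finset.sum_neg_distrib]
    refine Finset.sum_congr rfl fun i hi => ?_
    have hi' := Finset.mem_range.mp hi
    rw [if_neg (by omega)]
    have : s + (v - s) + i - s = i + (v - s) := by omega
    rw [this]; ring
  · refine Finset.sum_congr rfl fun i hi => ?_
    have hi' := Finset.mem_range.mp hi
    rw [if_pos (by omega)]
    have : s + i - s = i := by omega
    rw [this]; ring

/-- splitting the first row of a negacyclic conference matrix of order
`v ≡ 2 (mod 4)` into even and odd indexed subsequences `a = (0, c_2, ..., c_{v-2})` and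
`b = (c_1, c_3, ..., c_{v-1})` gives `NAF_a(k) + NAF_b(k) = NAF_c(2k) = 0` for
`0 < k < v/2`; i.e. `a` and `b` are N-complementary. -/
theorem split_negacyclic_conference_N_complementary (v : ℕ) (hv : v % 4 = 2) (c : ℕ → ℤ)
    (hc0 : c 0 = 0)
    (hcent : ∀ i, 0 < i → i < v → c i = 1 ∨ c i = -1)
    (hconf : (negacyclic v c) * (negacyclic v c).transpose =
      ((v : ℤ) - 1) • (1 : Matrix (Fin v) (Fin v) ℤ)) :
    ∀ k, 0 < k → k < v / 2 →
      NAF (v / 2) (fun i => c (2 * i)) k + NAF (v / 2) (fun i => c (2 * i + 1)) k =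
        NAF v c (2 * k) ∧
      NAF v c (2 * k) = 0 := by
  intro k hk hkv
  have hv0 : 0 < v := by omega
  have h2k : 2 * k < v := by omega
  have hNAF0 : NAF v c (2 * k) = 0 := by
    have he := conf_entry v c (2 * k) hv0 h2k
    rw [hconf, Matrix.smul_apply, Matrix.one_apply,
      if_neg (show (⟨0, hv0⟩ : Fin v) ≠ ⟨2 * k, h2k⟩ by
        simp [Fin.ext_iff]; omega), smul_zero] at he
    exact he.symm
  refine ⟨?_, hNAF0⟩
  have h := NAF_split (v / 2) k c
  rwa [show 2 * (v / 2) = v by omega] at h
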